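/- Let Φ be the character on the double tensor Hopf algebra extending the state φ of a non-commutative probability space (A, φ), and let β be the unique infinitesimal character with Φ = ε + Φ ≻ β. Then for any word w = a_1⋯a_n, Φ(w) = Σ_{I ∈ B_n} Π_{blocks J of I} β(a_J), the sum over interval partitions of [n]; i.e., the β(a_1⋯a_n) are the multivariate boolean cumulants, satisfying the recursion Φ(a_1⋯a_n) = Σ_{j=1}^{n} β(a_1⋯a_j) Φ(a_{j+1}⋯a_n). -/

import Mathlib

open scoped TensorProduct Classical

/-- Nonempty words with letters in `A`: a basis of the tensor algebra `T(A)`. -/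
def Wrd (A : Type*) := {l : List A // l ≠ []}

/-- The double tensor algebra `H = T̄(T(A))`: the free (monoid) algebra on bar-sequences
`w₁|⋯|w_m` of nonempty words `wᵢ ∈ T(A)`, with the concatenation (bar) product. -/
abbrev DT (k A : Type*) [CommRing k] := MonoidAlgebra k (FreeMonoid (Wrd A))

variable (k A : Type*) [Field k] [Ring A] [Algebra k A]

/-- The word `a₁⋯a_n` as an element of `H` (the empty word is the unit `1`). -/
noncomputable def wordEl (l : List A) : DT k A :=
  if h : l = [] then 1 else MonoidAlgebra.of k (FreeMonoid (Wrd A)) (FreeMonoid.of ⟨l, h⟩)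

/-- The bar element `w₁|⋯|w_m ∈ H` of a list of words. -/
noncomputable def barEl (ls : List (List A)) : DT k A := (ls.map (wordEl k A)).prod

/-- Decompose a (sorted) list of indices into its maximal runs of consecutive indices
(the connected components). -/
def runs {n : ℕ} : List (Fin n) → List (List (Fin n))
  | [] => []
  | [i] => [[i]]
  | i :: j :: rest =>
    match runs (j :: rest) with
    | [] => [[i]]
    | r :: rs => if (i : ℕ) + 1 = (j : ℕ) then (i :: r) :: rs else [i] :: r :: rs

/-- For a subset `S` of positions of `l`, the subword `a_S`. -/
noncomputable def subword (l : List A) (S : Finset (Fin l.length)) : DT k A :=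
  wordEl k A ((S.sort (· ≤ ·)).map l.get)

/-- For a subset `S` of positions of `l`, the bar element
`a_{J^S} = a_{J₁}|⋯|a_{J_m}` given by the connected components of the complement. -/
noncomputable def compBar (l : List A) (S : Finset (Fin l.length)) : DT k A :=
  barEl k A ((runs (Sᶜ.sort (· ≤ ·))).map fun r => r.map l.get)

/-- The coproduct on a word: `Δ(a₁⋯a_n) = Σ_{S ⊆ [n]} a_S ⊗ a_{J₁}|⋯|a_{J_m}`. -/
noncomputable def deltaWord (l : List A) : DT k A ⊗[k] DT k A :=
  ∑ S : Finset (Fin l.length), subword k A l S ⊗ₜ[k] compBar k A l S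

/-- The coproduct `Δ` of `H`, the multiplicative extension of `deltaWord`. -/
noncomputable def coprod : DT k A →ₐ[k] DT k A ⊗[k] DT k A :=
  MonoidAlgebra.lift k _ (FreeMonoid (Wrd A))
    (FreeMonoid.lift fun w : Wrd A => deltaWord k A w.1)

/-- The canonical counit `ε` of `H`, killing all nonempty bar-sequences. -/
noncomputable def counit : DT k A →ₐ[k] k :=
  MonoidAlgebra.lift k k (FreeMonoid (Wrd A)) (FreeMonoid.lift fun _ : Wrd A => (0 : k))

/-- `Δ⁺_≻` on a word: `Δ⁺_≻(a₁⋯a_n) = Σ_{1 ∉ S ⊂ [n]} a_S ⊗ a_{J^S_{[n]}}`. -/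
noncomputable def deltaSuccWord (l : List A) : DT k A ⊗[k] DT k A :=
  ∑ S : Finset (Fin l.length),
    if (¬ ∃ i ∈ S, (i : ℕ) = 0) ∧ S ≠ Finset.univ then
      subword k A l S ⊗ₜ[k] compBar k A l S else 0

/-- Extension of a function on the monomial basis of `H` to a linear map. -/
noncomputable def basisExt {M : Type*} [AddCommGroup M] [Module k M]
    (f : FreeMonoid (Wrd A) → M) : DT k A →ₗ[k] M :=
  (Finsupp.lsum k fun g => LinearMap.toSpanSingleton k M (f g)) ∘ₗ
    (MonoidAlgebra.coeffLinearEquiv k).toLinearMap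

/-- `Δ⁺_≻` on `H`, extended from words via `Δ⁺_≻(w·b) = Δ⁺_≻(w)·Δ(b)` (and `0` on the
unit). -/
noncomputable def dPlusSucc : DT k A →ₗ[k] DT k A ⊗[k] DT k A :=
  basisExt k A fun g =>
    match FreeMonoid.toList g with
    | [] => 0
    | w :: rest =>
        deltaSuccWord k A w.1 *
          coprod k A (MonoidAlgebra.of k (FreeMonoid (Wrd A)) (FreeMonoid.ofList rest))

/-- The right half-shuffle convolution `f ≻ g := m_k ∘ (f ⊗ g) ∘ Δ_≻` on linear forms
(with the unit conventions `ε ≻ f = f`, `f ≻ ε = 0` built into `Δ⁺_≻`). -/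
noncomputable def convSucc (f g : DT k A →ₗ[k] k) : DT k A →ₗ[k] k :=
  (LinearMap.mul' k k).comp ((TensorProduct.map f g).comp (dPlusSucc k A))

/-- The character `Φ` of `H` extending the state `φ` of the non-commutative
probability space `(A, φ)`. -/
noncomputable def extChar (φ : A →ₗ[k] k) : DT k A →ₐ[k] k :=
  MonoidAlgebra.lift k k (FreeMonoid (Wrd A))
    (FreeMonoid.lift fun w : Wrd A => φ w.1.prod)

section RunsLemmas

variable {n : ℕ}

lemma runs_cons_cons (i j : Fin n) (rest : List (Fin n)) :
    runs (i :: j :: rest) = match runs (j :: rest) with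
      | [] => [[i]]
      | r :: rs => if (i : ℕ) + 1 = (j : ℕ) then (i :: r) :: rs else [i] :: r :: rs := rfl

lemma runs_ne_nil : ∀ {m : List (Fin n)}, m ≠ [] → runs m ≠ []
  | [], h => absurd rfl h
  | [i], _ => by simp [runs]
  | i :: j :: rest, _ => by
    rw [runs_cons_cons]
    rcases h' : runs (j :: rest) with _ | ⟨r, rs⟩
    · simp [h']
    · by_cases hij : (i : ℕ) + 1 = (j : ℕ) <;> simp [h', hij]

lemma runs_blocks : ∀ (m : List (Fin n)), ∀ r ∈ runs m, r ≠ []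
  | [] => by simp [runs]
  | [i] => by simp [runs]
  | i :: j :: rest => by
    have ih := runs_blocks (j :: rest)
    intro r' hr'
    rw [runs_cons_cons] at hr'
    rcases h' : runs (j :: rest) with _ | ⟨r, rs⟩
    · simp only [h'] at hr'
      simp at hr'
      simp [hr']
    · rw [h'] at ih
      simp only [h'] at hr'
      by_cases hij : (i : ℕ) + 1 = (j : ℕ)
      · rw [if_pos hij] at hr'
        rcases List.mem_cons.1 hr' with rfl | h2
        · simp
        · exact ih _ (List.mem_cons_of_mem _ h2)
      · rw [if_neg hij] at hr'
        rcases List.mem_cons.1 hr' with rfl | h2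
        · simp
        · exact ih _ h2

lemma runs_chain : ∀ (m : List (Fin n)), m ≠ [] →
    List.Chain' (fun a b : Fin n => (a : ℕ) + 1 = (b : ℕ)) m → runs m = [m]
  | [], h, _ => absurd rfl h
  | [i], _, _ => rfl
  | i :: j :: rest, _, hc => by
    have hij : (i : ℕ) + 1 = (j : ℕ) := (List.isChain_cons_cons.1 hc).1
    have hrec := runs_chain (j :: rest) (by simp) (List.isChain_cons_cons.1 hc).2
    rw [runs_cons_cons, hrec]
    simp [hij]

lemma runs_two : ∀ (m : List (Fin n)),
    ¬ List.Chain' (fun a b : Fin n => (a : ℕ) + 1 = (b : ℕ)) m →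
    ∃ r1 r2 rs, runs m = r1 :: r2 :: rs
  | [], h => absurd List.isChain_nil h
  | [i], h => absurd (List.isChain_singleton i) h
  | i :: j :: rest, h => by
    by_cases hij : (i : ℕ) + 1 = (j : ℕ)
    · have hnc : ¬ List.Chain' (fun a b : Fin n => (a : ℕ) + 1 = (b : ℕ)) (j :: rest) :=
        fun hc => h (List.isChain_cons_cons.2 ⟨hij, hc⟩)
      obtain ⟨r1, r2, rs, hr⟩ := runs_two (j :: rest) hnc
      exact ⟨i :: r1, r2, rs, by rw [runs_cons_cons, hr]; simp [hij]⟩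
    · obtain ⟨r, rs, hr⟩ := List.exists_cons_of_ne_nil (runs_ne_nil (by simp : (j :: rest) ≠ []))
      exact ⟨[i], r, rs, by rw [runs_cons_cons, hr]; simp [hij]⟩

lemma chain_val {m : List (Fin n)}
    (hc : List.Chain' (fun a b : Fin n => (a : ℕ) + 1 = (b : ℕ)) m) :
    ∀ p (h : p < m.length), (m.get ⟨p, h⟩ : ℕ) = (m.get ⟨0, by omega⟩ : ℕ) + p := by
  intro p
  induction p with
  | zero => intro h; simp
  | succ p ih =>
    intro h
    have hstep := List.isChain_iff_getElem.1 hc p (by omega)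
    have := ih (by omega)
    simp only [List.get_eq_getElem] at *
    omega

lemma mem_take_finRange {j : ℕ} {i : Fin n} :
    i ∈ (List.finRange n).take j ↔ (i : ℕ) < j := by
  constructor
  · intro h
    obtain ⟨p, hp, hpe⟩ := List.mem_iff_getElem.1 h
    rw [List.getElem_take] at hpe
    simp only [List.getElem_finRange] at hpe
    have : (i : ℕ) = p := by rw [← hpe]; simp
    simp only [List.length_take, List.length_finRange, lt_min_iff] at hp
    omega
  · intro h
    refine List.mem_iff_getElem.2 ⟨(i : ℕ), ?_, ?_⟩
    · simp; omega
    · rw [List.getElem_take]; simp only [List.getElem_finRange]; apply Fin.ext; simp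

lemma mem_drop_finRange {j : ℕ} {i : Fin n} :
    i ∈ (List.finRange n).drop j ↔ j ≤ (i : ℕ) := by
  constructor
  · intro h
    obtain ⟨p, hp, hpe⟩ := List.mem_iff_getElem.1 h
    rw [List.getElem_drop] at hpe
    simp only [List.getElem_finRange] at hpe
    have : (i : ℕ) = j + p := by rw [← hpe]; simp
    omega
  · intro h
    have hi : (i : ℕ) < n := i.2
    refine List.mem_iff_getElem.2 ⟨(i : ℕ) - j, ?_, ?_⟩
    · simp; omega
    · rw [List.getElem_drop]; simp only [List.getElem_finRange]; apply Fin.ext; simp; omega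

lemma sorted_take_finRange (j : ℕ) : List.Pairwise (· ≤ ·) ((List.finRange n).take j) :=
  (((List.pairwise_lt_finRange n).sublist (List.take_sublist _ _)).imp le_of_lt)

lemma sorted_drop_finRange (j : ℕ) : List.Pairwise (· ≤ ·) ((List.finRange n).drop j) :=
  (((List.pairwise_lt_finRange n).sublist (List.drop_sublist _ _)).imp le_of_lt)

lemma nodup_take_finRange (j : ℕ) : ((List.finRange n).take j).Nodup :=
  (List.nodup_finRange n).sublist (List.take_sublist _ _)

lemma nodup_drop_finRange (j : ℕ) : ((List.finRange n).drop j).Nodup :=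
  (List.nodup_finRange n).sublist (List.drop_sublist _ _)

lemma chain_take_finRange (j : ℕ) :
    List.Chain' (fun a b : Fin n => (a : ℕ) + 1 = (b : ℕ)) ((List.finRange n).take j) := by
  refine List.isChain_iff_getElem.2 ?_
  intro p hp
  simp only [List.get_eq_getElem, List.getElem_take, List.getElem_finRange]
  simp

end RunsLemmas
section AlgLemmas

lemma barEl_cons (w : List A) (ws : List (List A)) :
    barEl k A (w :: ws) = wordEl k A w * barEl k A ws := by
  simp [barEl]

lemma counit_wordEl_ne (l : List A) (h : l ≠ []) : counit k A (wordEl k A l) = 0 := by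
  rw [wordEl, dif_neg h, counit]
  simp
  rfl

lemma counit_barEl_cons (w : List A) (ws : List (List A)) (hw : w ≠ []) :
    counit k A (barEl k A (w :: ws)) = 0 := by
  rw [barEl_cons, map_mul, counit_wordEl_ne k A _ hw, zero_mul]

lemma beta_compBar_zero (β : DT k A →ₗ[k] k)
    (hβ2 : ∀ x y : DT k A, counit k A x = 0 → counit k A y = 0 → β (x * y) = 0)
    (l : List A) (S : Finset (Fin l.length))
    (hnc : ¬ List.Chain' (fun a b : Fin l.length => (a : ℕ) + 1 = (b : ℕ))
      (Sᶜ.sort (· ≤ ·))) :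
    β (compBar k A l S) = 0 := by
  obtain ⟨r1, r2, rs, hr⟩ := runs_two _ hnc
  have hb := runs_blocks (Sᶜ.sort (· ≤ ·))
  rw [hr] at hb
  rw [compBar, hr, List.map_cons, List.map_cons, barEl_cons]
  apply hβ2
  · apply counit_wordEl_ne
    simp only [ne_eq, List.map_eq_nil_iff]
    exact hb r1 (by simp)
  · apply counit_barEl_cons
    simp only [ne_eq, List.map_eq_nil_iff]
    exact hb r2 (by simp)

lemma dPlusSucc_wordEl (l : List A) (h : l ≠ []) :
    dPlusSucc k A (wordEl k A l) = deltaSuccWord k A l := by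
  rw [wordEl, dif_neg h, dPlusSucc, basisExt]
  rw [MonoidAlgebra.of_apply]
  rw [LinearMap.comp_apply, LinearEquiv.coe_coe, MonoidAlgebra.coeffLinearEquiv_apply,
    MonoidAlgebra.coeff_single]
  erw [Finsupp.lsum_single]
  rw [LinearMap.toSpanSingleton_apply, one_smul]
  show deltaSuccWord k A l * (coprod k A) ((MonoidAlgebra.of k (FreeMonoid (Wrd A))) (FreeMonoid.ofList [])) = _
  rw [show FreeMonoid.ofList ([] : List (Wrd A)) = 1 from rfl, map_one, map_one, mul_one]

lemma convSucc_wordEl (f β : DT k A →ₗ[k] k) (l : List A) (h : l ≠ []) :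
    convSucc k A f β (wordEl k A l) =
      ∑ S : Finset (Fin l.length),
        if (¬ ∃ i ∈ S, (i : ℕ) = 0) ∧ S ≠ Finset.univ then
          f (subword k A l S) * β (compBar k A l S) else 0 := by
  rw [convSucc]
  simp only [LinearMap.comp_apply]
  rw [dPlusSucc_wordEl k A l h, deltaSuccWord, map_sum, map_sum]
  refine Finset.sum_congr rfl fun S _ => ?_
  split <;> simp

end AlgLemmas
set_option linter.unusedSectionVars false

/-- The interval subset `{j, …, n-1}` of `Fin n`. -/
def Sjset (n j : ℕ) : Finset (Fin n) := Finset.filter (fun i => j ≤ (i : ℕ)) Finset.univ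

section SjLemmas

lemma Sjset_compl (n j : ℕ) :
    (Sjset n j)ᶜ = Finset.filter (fun i : Fin n => (i : ℕ) < j) Finset.univ := by
  ext i; simp [Sjset]

lemma sort_Sjset_compl (n j : ℕ) :
    ((Sjset n j)ᶜ).sort (· ≤ ·) = (List.finRange n).take j := by
  apply List.Perm.eq_of_pairwise' (Finset.pairwise_sort _ _) (sorted_take_finRange j)
  apply List.perm_of_nodup_nodup_toFinset_eq (Finset.sort_nodup _ _) (nodup_take_finRange j)
  ext i
  simp [Sjset_compl, mem_take_finRange]

lemma sort_Sjset (n j : ℕ) :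
    (Sjset n j).sort (· ≤ ·) = (List.finRange n).drop j := by
  apply List.Perm.eq_of_pairwise' (Finset.pairwise_sort _ _) (sorted_drop_finRange j)
  apply List.perm_of_nodup_nodup_toFinset_eq (Finset.sort_nodup _ _) (nodup_drop_finRange j)
  ext i
  simp [Sjset, mem_drop_finRange]

lemma subword_Sjset (l : List A) (j : ℕ) :
    subword k A l (Sjset l.length j) = wordEl k A (l.drop j) := by
  rw [subword, sort_Sjset, List.map_drop, List.map_get_finRange]

lemma compBar_Sjset (l : List A) (j : ℕ) (hj1 : 1 ≤ j) (hjn : j ≤ l.length) :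
    compBar k A l (Sjset l.length j) = wordEl k A (l.take j) := by
  rw [compBar, sort_Sjset_compl]
  rw [runs_chain _ (by
    apply List.ne_nil_of_length_pos
    simp only [List.length_take, List.length_finRange]
    omega) (chain_take_finRange j)]
  simp [barEl, List.map_take, List.map_get_finRange]

lemma cond_Sjset (n j : ℕ) (hj1 : 1 ≤ j) (hjn : j ≤ n) :
    (¬ ∃ i ∈ Sjset n j, (i : ℕ) = 0) ∧ Sjset n j ≠ Finset.univ := by
  constructor
  · rintro ⟨i, hi, h0⟩
    simp [Sjset] at hi
    omega
  · intro h
    have : (⟨0, by omega⟩ : Fin n) ∈ Sjset n j := h ▸ Finset.mem_univ _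
    simp [Sjset] at this
    omega

lemma length_sort_Sjset_compl (n j : ℕ) (hjn : j ≤ n) :
    (((Sjset n j)ᶜ).sort (· ≤ ·)).length = j := by
  rw [sort_Sjset_compl]
  simp only [List.length_take, List.length_finRange]
  omega

lemma S_eq_Sjset {n : ℕ} (S : Finset (Fin n)) (h0 : ¬ ∃ i ∈ S, (i : ℕ) = 0)
    (hn : 0 < n)
    (hc : List.Chain' (fun a b : Fin n => (a : ℕ) + 1 = (b : ℕ)) (Sᶜ.sort (· ≤ ·))) :
    S = Sjset n (Sᶜ.sort (· ≤ ·)).length ∧ 1 ≤ (Sᶜ.sort (· ≤ ·)).length ∧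
      (Sᶜ.sort (· ≤ ·)).length ≤ n := by
  set m := Sᶜ.sort (· ≤ ·) with hm
  have h0c : (⟨0, hn⟩ : Fin n) ∈ Sᶜ := by
    simp only [Finset.mem_compl]
    intro hmem
    exact h0 ⟨_, hmem, rfl⟩
  have h0m : (⟨0, hn⟩ : Fin n) ∈ m := (Finset.mem_sort _).2 h0c
  have hlen1 : 1 ≤ m.length := List.length_pos_iff.2 (List.ne_nil_of_mem h0m)
  have hlenn : m.length ≤ n := by
    rw [hm, Finset.length_sort]
    simpa using Finset.card_le_univ Sᶜ
  -- head is 0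
  have hhead : (m.get ⟨0, by omega⟩ : ℕ) = 0 := by
    obtain ⟨⟨p, hp⟩, hpe⟩ := List.mem_iff_get.1 h0m
    have hs : List.Pairwise (· ≤ ·) m := Finset.pairwise_sort _ _
    have : m.get ⟨0, by omega⟩ ≤ m.get ⟨p, hp⟩ := by
      rcases Nat.eq_zero_or_pos p with rfl | hpp
      · exact le_refl _
      · exact List.pairwise_iff_get.1 hs _ _ hpp
    rw [hpe] at this
    have h2 : (m.get ⟨0, by omega⟩ : ℕ) ≤ 0 := this
    omega
  have hval : ∀ p (hp : p < m.length), (m.get ⟨p, hp⟩ : ℕ) = p := by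
    intro p hp
    rw [chain_val hc p hp, hhead]
    omega
  have hmemm : ∀ i : Fin n, i ∈ Sᶜ ↔ (i : ℕ) < m.length := by
    intro i
    rw [← Finset.mem_sort (α := Fin n) (· ≤ ·), ← hm]
    constructor
    · intro hi
      obtain ⟨⟨p, hp⟩, hpe⟩ := List.mem_iff_get.1 hi
      have := hval p hp
      rw [hpe] at this
      omega
    · intro hi
      refine List.mem_iff_get.2 ⟨⟨(i : ℕ), hi⟩, ?_⟩
      apply Fin.ext
      exact hval _ hi
  refine ⟨?_, hlen1, hlenn⟩
  ext i
  simp only [Sjset, Finset.mem_filter, Finset.mem_univ, true_and]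
  have hi := hmemm i
  rw [Finset.mem_compl] at hi
  constructor
  · intro hiS
    rcases Nat.lt_or_ge (i : ℕ) m.length with h | h
    · exact absurd hiS (hi.2 h)
    · exact h
  · intro h
    by_contra hns
    have := hi.1 hns
    omega

end SjLemmas
section ConvEval

lemma conv_eval (f β : DT k A →ₗ[k] k)
    (hβ2 : ∀ x y : DT k A, counit k A x = 0 → counit k A y = 0 → β (x * y) = 0)
    (l : List A) (h : l ≠ []) :
    convSucc k A f β (wordEl k A l) =
      ∑ j ∈ Finset.Icc 1 l.length,
        f (wordEl k A (l.drop j)) * β (wordEl k A (l.take j)) := by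
  have hn : 0 < l.length := List.length_pos_iff.2 h
  rw [convSucc_wordEl k A f β l h]
  refine Finset.sum_bij_ne_zero (fun S _ _ => ((Sᶜ).sort (· ≤ ·)).length) ?_ ?_ ?_ ?_
  · -- membership
    intro S h1 h2
    rw [Finset.mem_Icc]
    by_cases hcond : (¬ ∃ i ∈ S, (i : ℕ) = 0) ∧ S ≠ Finset.univ
    · by_cases hc : List.Chain' (fun a b : Fin l.length => (a : ℕ) + 1 = (b : ℕ))
        (Sᶜ.sort (· ≤ ·))
      · obtain ⟨_, h3, h4⟩ := S_eq_Sjset S hcond.1 hn hc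
        exact ⟨h3, h4⟩
      · exact absurd (by rw [if_pos hcond, beta_compBar_zero k A β hβ2 l S hc, mul_zero]) h2
    · exact absurd (if_neg hcond) h2
  · -- injectivity
    intro S1 h11 h12 S2 h21 h22 he
    have key : ∀ S : Finset (Fin l.length),
        (if (¬ ∃ i ∈ S, (i : ℕ) = 0) ∧ S ≠ Finset.univ then
          f (subword k A l S) * β (compBar k A l S) else 0) ≠ 0 →
        S = Sjset l.length ((Sᶜ).sort (· ≤ ·)).length := by
      intro S hS
      by_cases hcond : (¬ ∃ i ∈ S, (i : ℕ) = 0) ∧ S ≠ Finset.univ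
      · by_cases hc : List.Chain' (fun a b : Fin l.length => (a : ℕ) + 1 = (b : ℕ))
          (Sᶜ.sort (· ≤ ·))
        · exact (S_eq_Sjset S hcond.1 hn hc).1
        · exact absurd (by rw [if_pos hcond, beta_compBar_zero k A β hβ2 l S hc, mul_zero]) hS
      · exact absurd (if_neg hcond) hS
    rw [key S1 h12, key S2 h22]
    exact congrArg (Sjset l.length) he
  · -- surjectivity
    intro j hj hg
    rw [Finset.mem_Icc] at hj
    refine ⟨Sjset l.length j, Finset.mem_univ _, ?_, ?_⟩
    · rw [if_pos (cond_Sjset l.length j hj.1 hj.2),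
        subword_Sjset k A l j, compBar_Sjset k A l j hj.1 hj.2]
      exact hg
    · exact length_sort_Sjset_compl l.length j hj.2
  · -- values
    intro S h1 h2
    by_cases hcond : (¬ ∃ i ∈ S, (i : ℕ) = 0) ∧ S ≠ Finset.univ
    · by_cases hc : List.Chain' (fun a b : Fin l.length => (a : ℕ) + 1 = (b : ℕ))
        (Sᶜ.sort (· ≤ ·))
      · obtain ⟨hS, h3, h4⟩ := S_eq_Sjset S hcond.1 hn hc
        rw [if_pos hcond]
        conv_lhs => rw [hS]
        rw [subword_Sjset k A l _, compBar_Sjset k A l _ h3 h4]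
      · exact absurd (by rw [if_pos hcond, beta_compBar_zero k A β hβ2 l S hc, mul_zero]) h2
    · exact absurd (if_neg hcond) h2

lemma phi_rec (φ : A →ₗ[k] k) (β : DT k A →ₗ[k] k)
    (hβ2 : ∀ x y : DT k A, counit k A x = 0 → counit k A y = 0 → β (x * y) = 0)
    (hβ : (extChar k A φ).toLinearMap =
      (counit k A).toLinearMap + convSucc k A (extChar k A φ).toLinearMap β)
    (l : List A) (h : l ≠ []) :
    extChar k A φ (wordEl k A l) =
      ∑ j ∈ Finset.Icc 1 l.length,
        β (wordEl k A (l.take j)) * extChar k A φ (wordEl k A (l.drop j)) := by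
  have := LinearMap.congr_fun hβ (wordEl k A l)
  simp only [LinearMap.add_apply, AlgHom.toLinearMap_apply] at this
  rw [this, counit_wordEl_ne k A l h, zero_add,
    conv_eval k A (extChar k A φ).toLinearMap β hβ2 l h]
  exact Finset.sum_congr rfl fun j _ => mul_comm _ _

end ConvEval
/-- The boolean cumulant recursion functional. -/
noncomputable def BW (b : List A → k) : List A → k
  | [] => 1
  | a :: t => ∑ j ∈ Finset.range (t.length + 1),
      b (List.take (j + 1) (a :: t)) * BW b (List.drop j t)
termination_by l => l.length
decreasing_by simp

section BWsec

lemma BW_nil (b : List A → k) : BW k A b [] = 1 := by rw [BW]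

lemma BW_rec (b : List A → k) (l : List A) (h : l ≠ []) :
    BW k A b l = ∑ j ∈ Finset.Icc 1 l.length, b (l.take j) * BW k A b (l.drop j) := by
  obtain ⟨a, t, rfl⟩ := List.exists_cons_of_ne_nil h
  rw [BW]
  have : Finset.Icc 1 (a :: t).length = Finset.Ico 1 ((a :: t).length + 1) := by
    rw [Finset.Ico_add_one_right_eq_Icc]
  rw [this, Finset.sum_Ico_eq_sum_range]
  simp only [List.length_cons, Nat.add_sub_cancel]
  refine Finset.sum_congr rfl fun j _ => ?_
  rw [add_comm 1 j]
  rfl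

lemma phi_eq_BW (φ : A →ₗ[k] k) (β : DT k A →ₗ[k] k)
    (hβ2 : ∀ x y : DT k A, counit k A x = 0 → counit k A y = 0 → β (x * y) = 0)
    (hβ : (extChar k A φ).toLinearMap =
      (counit k A).toLinearMap + convSucc k A (extChar k A φ).toLinearMap β) :
    ∀ (nn : ℕ) (l : List A), l.length ≤ nn → l ≠ [] →
      extChar k A φ (wordEl k A l) = BW k A (fun w => β (wordEl k A w)) l := by
  intro nn
  induction nn with
  | zero =>
    intro l h1 h2
    rw [Nat.le_zero, List.length_eq_zero_iff] at h1
    exact absurd h1 h2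
  | succ nn ih =>
    intro l h1 h2
    rw [phi_rec k A φ β hβ2 hβ l h2, BW_rec]
    · refine Finset.sum_congr rfl fun j hj => ?_
      rw [Finset.mem_Icc] at hj
      by_cases hd : l.drop j = []
      · rw [hd, BW_nil]
        simp [wordEl]
      · rw [ih (l.drop j) (by simp; omega) hd]
    · exact h2

end BWsec
set_option maxHeartbeats 1000000 in
/-- Sum over strict chains of length `q+1` from `s` to `n` in `{0,…,n}`. -/
noncomputable def chT (n q s : ℕ) (g : ℕ → ℕ → k) : k :=
  ∑ c : Fin (q + 1) → Fin (n + 1),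
    if StrictMono c ∧ (c 0 : ℕ) = s ∧ (c (Fin.last q) : ℕ) = n then
      ∏ j : Fin q, g (c j.castSucc : ℕ) (c j.succ : ℕ) else 0

/-- Sum over all strict chains from `s` to `n`. -/
noncomputable def chS (n s : ℕ) (g : ℕ → ℕ → k) : k :=
  ∑ q ∈ Finset.Icc 1 (n - s), chT k n q s g

section Chains

lemma strictMono_cons_iff {N q : ℕ} (x : Fin N) (c' : Fin (q + 1) → Fin N) :
    StrictMono (Fin.cons x c' : Fin (q + 2) → Fin N) ↔ x < c' 0 ∧ StrictMono c' := by
  rw [Fin.strictMono_iff_lt_succ, Fin.strictMono_iff_lt_succ]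
  constructor
  · intro h
    refine ⟨?_, fun i => ?_⟩
    · have := h 0
      simpa using this
    · have := h i.succ
      rw [← Fin.succ_castSucc] at this
      simpa [Fin.cons_succ] using this
  · rintro ⟨h0, h⟩ i
    refine Fin.cases ?_ ?_ i
    · simpa using h0
    · intro i0
      rw [← Fin.succ_castSucc]
      simpa [Fin.cons_succ] using h i0

lemma strictMono_gap {N q : ℕ} (c : Fin (q + 1) → Fin N) (hc : StrictMono c) :
    (c 0 : ℕ) + q ≤ (c (Fin.last q) : ℕ) := by
  have key : ∀ p (hp : p ≤ q), (c 0 : ℕ) + p ≤ (c ⟨p, by omega⟩ : ℕ) := by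
    intro p
    induction p with
    | zero => intro _; simp
    | succ p ih =>
      intro hp
      have h1 := ih (by omega)
      have h2 : c ⟨p, by omega⟩ < c ⟨p + 1, by omega⟩ := hc (by simp [Fin.lt_def])
      have h3 := Fin.lt_def.1 h2
      omega
  have := key q le_rfl
  simpa [Fin.last] using this

lemma chT_zero_of_gt (n q s : ℕ) (hq : 1 ≤ q) (hgt : n < s + q) (g : ℕ → ℕ → k) :
    chT k n q s g = 0 := by
  rw [chT]
  apply Finset.sum_eq_zero
  intro c _
  rw [if_neg]
  rintro ⟨h1, h2, h3⟩
  have := strictMono_gap c h1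
  omega

lemma chT_q0 (n j : ℕ) (g : ℕ → ℕ → k) :
    chT k n 0 j g = if j = n then 1 else 0 := by
  rw [chT]
  rw [← Equiv.sum_comp (Equiv.funUnique (Fin 1) (Fin (n + 1))).symm]
  have hsm : ∀ x : Fin (n + 1), StrictMono (fun _ : Fin 1 => x) := by
    intro x a b hab
    exact absurd hab (by omega)
  by_cases hj : j = n
  · rw [if_pos hj]
    rw [Fintype.sum_eq_single (⟨n, Nat.lt_succ_self n⟩ : Fin (n + 1))]
    · rw [if_pos ⟨hsm _, (by exact hj.symm : ((⟨n, Nat.lt_succ_self n⟩ : Fin (n+1)) : ℕ) = j), rfl⟩]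
      simp
    · intro x hx
      rw [if_neg]
      rintro ⟨-, h2, -⟩
      have h2' : (x : ℕ) = j := h2
      refine hx (Fin.ext ?_)
      simp only []
      omega
  · rw [if_neg hj]
    apply Finset.sum_eq_zero
    intro x _
    rw [if_neg]
    rintro ⟨-, h2, h3⟩
    simp [Equiv.funUnique] at h2 h3
    omega

lemma chT_succ (n q' s : ℕ) (hs : s ≤ n) (g : ℕ → ℕ → k) :
    chT k n (q' + 1) s g =
      ∑ c' : Fin (q' + 1) → Fin (n + 1),
        if StrictMono c' ∧ s < (c' 0 : ℕ) ∧ (c' (Fin.last q') : ℕ) = n then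
          g s (c' 0 : ℕ) * ∏ i : Fin q', g (c' i.castSucc : ℕ) (c' i.succ : ℕ) else 0 := by
  rw [chT, ← Equiv.sum_comp (Fin.consEquiv (fun _ => Fin (n + 1))), Fintype.sum_prod_type]
  rw [Finset.sum_comm]
  refine Finset.sum_congr rfl fun c' _ => ?_
  have key : ∀ x : Fin (n + 1),
      (if StrictMono (Fin.cons x c' : Fin (q' + 2) → Fin (n + 1)) ∧
          ((Fin.cons x c' : Fin (q' + 2) → Fin (n + 1)) 0 : ℕ) = s ∧
          ((Fin.cons x c' : Fin (q' + 2) → Fin (n + 1)) (Fin.last (q' + 1)) : ℕ) = n then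
        ∏ j : Fin (q' + 1), g ((Fin.cons x c' : Fin (q' + 2) → Fin (n + 1)) j.castSucc : ℕ)
          ((Fin.cons x c' : Fin (q' + 2) → Fin (n + 1)) j.succ : ℕ) else 0) =
      if x = (⟨s, by omega⟩ : Fin (n + 1)) then
        (if StrictMono c' ∧ s < (c' 0 : ℕ) ∧ (c' (Fin.last q') : ℕ) = n then
          g s (c' 0 : ℕ) * ∏ i : Fin q', g (c' i.castSucc : ℕ) (c' i.succ : ℕ) else 0)
      else 0 := by
    intro x
    by_cases hx : x = (⟨s, by omega⟩ : Fin (n + 1))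
    · subst hx
      rw [if_pos rfl]
      have hc1 : ((Fin.cons (⟨s, by omega⟩ : Fin (n+1)) c' : Fin (q' + 2) → Fin (n + 1)) 0 : ℕ) = s := by
        simp
      have hc2 : (Fin.cons (⟨s, by omega⟩ : Fin (n+1)) c' : Fin (q' + 2) → Fin (n + 1)) (Fin.last (q' + 1)) = c' (Fin.last q') := by
        rw [← Fin.succ_last, Fin.cons_succ]
      have hprod : ∏ j : Fin (q' + 1),
          g ((Fin.cons (⟨s, by omega⟩ : Fin (n+1)) c' : Fin (q' + 2) → Fin (n + 1)) j.castSucc : ℕ)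
            ((Fin.cons (⟨s, by omega⟩ : Fin (n+1)) c' : Fin (q' + 2) → Fin (n + 1)) j.succ : ℕ) =
          g s (c' 0 : ℕ) * ∏ i : Fin q', g (c' i.castSucc : ℕ) (c' i.succ : ℕ) := by
        rw [Fin.prod_univ_succ]
        refine congrArg₂ (· * ·) ?_ (Finset.prod_congr rfl fun i _ => ?_)
        · simp only [Fin.castSucc_zero, Fin.cons_zero, Fin.cons_succ]
        · simp only [← Fin.succ_castSucc, Fin.cons_succ]
      rw [hprod]
      refine if_congr ?_ rfl rfl
      rw [strictMono_cons_iff, hc1, hc2]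
      constructor
      · rintro ⟨⟨ha, hb⟩, -, hd⟩
        exact ⟨hb, by simpa [Fin.lt_def] using ha, hd⟩
      · rintro ⟨ha, hb, hd⟩
        exact ⟨⟨by simpa [Fin.lt_def] using hb, ha⟩, rfl, hd⟩
    · rw [if_neg hx, if_neg]
      rintro ⟨-, h2, -⟩
      simp only [Fin.cons_zero] at h2
      exact hx (Fin.ext (by simpa using h2))
  calc ∑ x : Fin (n + 1), _ = _ := Finset.sum_congr rfl fun x _ => key x
    _ = _ := by rw [Finset.sum_ite_eq' Finset.univ (⟨s, by omega⟩ : Fin (n + 1))]; simp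

end Chains
section ChSrec

lemma inner_sum_eval (n s j : ℕ) (hs : s < n) (hj : j ∈ Finset.Ioc s n) (g : ℕ → ℕ → k) :
    ∑ q' ∈ Finset.range (n - s), chT k n q' j g = if j = n then 1 else chS k n j g := by
  rw [Finset.mem_Ioc] at hj
  rw [Finset.range_eq_Ico, Finset.sum_eq_sum_Ico_succ_bot (by omega : 0 < n - s)]
  rw [chT_q0]
  by_cases hjn : j = n
  · rw [if_pos hjn, if_pos hjn]
    have hz : ∑ q' ∈ Finset.Ico (0 + 1) (n - s), chT k n q' j g = 0 := by
      apply Finset.sum_eq_zero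
      intro q' hq'
      rw [Finset.mem_Ico] at hq'
      exact chT_zero_of_gt k n q' j hq'.1 (by omega) g
    rw [hz, add_zero]
  · rw [if_neg hjn, if_neg hjn, zero_add, chS]
    rw [show Finset.Icc 1 (n - j) = Finset.Ico 1 (n - j + 1) from (Finset.Ico_add_one_right_eq_Icc _ _).symm]
    symm
    apply Finset.sum_subset
    · apply Finset.Ico_subset_Ico le_rfl
      omega
    · intro q' hq1 hq2
      rw [Finset.mem_Ico] at hq1 hq2
      push_neg at hq2
      exact chT_zero_of_gt k n q' j hq1.1 (by omega) g

lemma chT_split (n q' s : ℕ) (hs : s < n) (g : ℕ → ℕ → k) :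
    chT k n (q' + 1) s g = ∑ j ∈ Finset.Ioc s n, g s j * chT k n q' j g := by
  rw [chT_succ k n q' s hs.le g]
  simp only [chT, Finset.mul_sum]
  rw [Finset.sum_comm]
  refine Finset.sum_congr rfl fun c' _ => ?_
  by_cases hP : StrictMono c' ∧ s < (c' 0 : ℕ) ∧ (c' (Fin.last q') : ℕ) = n
  · rw [if_pos hP]
    have step : ∀ j ∈ Finset.Ioc s n,
        g s j * (if StrictMono c' ∧ (c' 0 : ℕ) = j ∧ (c' (Fin.last q') : ℕ) = n then
          ∏ i : Fin q', g (c' i.castSucc : ℕ) (c' i.succ : ℕ) else 0) =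
        if (c' 0 : ℕ) = j then g s j * ∏ i : Fin q', g (c' i.castSucc : ℕ) (c' i.succ : ℕ)
        else 0 := by
      intro j hj
      by_cases hcj : (c' 0 : ℕ) = j
      · rw [if_pos hcj, if_pos ⟨hP.1, hcj, hP.2.2⟩]
      · rw [if_neg hcj, if_neg (by tauto), mul_zero]
    rw [Finset.sum_congr rfl step, Finset.sum_ite_eq (Finset.Ioc s n) ((c' 0 : ℕ))]
    rw [if_pos (Finset.mem_Ioc.2 ⟨hP.2.1, by omega⟩)]
  · rw [if_neg hP]
    symm
    apply Finset.sum_eq_zero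
    intro j hj
    by_cases hc : StrictMono c' ∧ ((c' 0 : ℕ) = j) ∧ (c' (Fin.last q') : ℕ) = n
    · exact absurd ⟨hc.1, by rw [hc.2.1]; exact (Finset.mem_Ioc.1 hj).1, hc.2.2⟩ hP
    · rw [if_neg hc, mul_zero]

lemma chS_rec (n s : ℕ) (hs : s < n) (g : ℕ → ℕ → k) :
    chS k n s g = ∑ j ∈ Finset.Ioc s n, g s j * (if j = n then 1 else chS k n j g) := by
  rw [chS]
  rw [show Finset.Icc 1 (n - s) = Finset.Ico 1 (n - s + 1) from (Finset.Ico_add_one_right_eq_Icc _ _).symm]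
  rw [Finset.sum_Ico_eq_sum_range]
  simp only [Nat.add_sub_cancel]
  have step : ∀ q' ∈ Finset.range (n - s), chT k n (1 + q') s g =
      ∑ j ∈ Finset.Ioc s n, g s j * chT k n q' j g := by
    intro q' _
    rw [add_comm 1 q', chT_split k n q' s hs g]
  rw [Finset.sum_congr rfl step, Finset.sum_comm]
  refine Finset.sum_congr rfl fun j hj => ?_
  rw [← Finset.mul_sum, inner_sum_eval k n s j hs hj g]

end ChSrec
section Final

lemma chS_eq_BW (b : List A → k) (l : List A) :
    ∀ (d s : ℕ), s < l.length → l.length - s ≤ d →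
      chS k l.length s (fun a bnd => b ((l.drop a).take (bnd - a))) = BW k A b (l.drop s) := by
  intro d
  induction d with
  | zero => intro s h1 h2; omega
  | succ d ih =>
    intro s h1 h2
    rw [chS_rec k l.length s h1,
      BW_rec k A b (l.drop s) (by rw [ne_eq, List.drop_eq_nil_iff]; omega)]
    rw [List.length_drop]
    refine Finset.sum_nbij' (i := fun j => j - s) (j := fun j' => s + j') ?_ ?_ ?_ ?_ ?_
    · intro j hj; rw [Finset.mem_Ioc] at hj; rw [Finset.mem_Icc]; omega
    · intro j' hj'; rw [Finset.mem_Icc] at hj'; rw [Finset.mem_Ioc]; omega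
    · intro j hj; rw [Finset.mem_Ioc] at hj; omega
    · intro j' hj'; rw [Finset.mem_Icc] at hj'; omega
    · intro j hj
      rw [Finset.mem_Ioc] at hj
      have hd : (l.drop s).drop (j - s) = l.drop j := by
        rw [List.drop_drop]
        congr 1
        omega
      refine congrArg₂ (· * ·) rfl ?_
      rw [hd]
      by_cases hj2 : j = l.length
      · rw [if_pos hj2, hj2, List.drop_length, BW_nil]
      · rw [if_neg hj2, ih j (by omega) (by omega)]

end Final
/-- let `Φ` be the character of the double tensor Hopf algebra extending
the state `φ` of `(A, φ)` and let `β` be the (unique) infinitesimal character with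
`Φ = ε + Φ ≻ β`.  Then for any word `w = a₁⋯a_n`,
`Φ(w) = Σ_{I ∈ B_n} Π_{J block of I} β(a_J)` (sum over interval partitions, here
encoded by strictly increasing chains of cut points `0 = c₀ < c₁ < ⋯ < c_q = n`);
i.e. the `β(a₁⋯a_n)` are the multivariate boolean cumulants, and they satisfy the
boolean recursion `Φ(a₁⋯a_n) = Σ_{j=1}^{n} β(a₁⋯a_j) Φ(a_{j+1}⋯a_n)`. -/
theorem boolean_moment_cumulant
    (φ : A →ₗ[k] k) (hφ : φ 1 = 1)
    (β : DT k A →ₗ[k] k)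
    (hβ1 : β 1 = 0)
    (hβ2 : ∀ x y : DT k A, counit k A x = 0 → counit k A y = 0 → β (x * y) = 0)
    (hβ : (extChar k A φ).toLinearMap =
      (counit k A).toLinearMap + convSucc k A (extChar k A φ).toLinearMap β) :
    (∀ l : List A, l ≠ [] →
      extChar k A φ (wordEl k A l) =
        ∑ q ∈ Finset.Icc 1 l.length, ∑ c : Fin (q + 1) → Fin (l.length + 1),
          if StrictMono c ∧ (c 0 : ℕ) = 0 ∧ (c (Fin.last q) : ℕ) = l.length then
            ∏ j : Fin q,
              β (wordEl k A ((l.drop (c j.castSucc : ℕ)).take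
                  ((c j.succ : ℕ) - (c j.castSucc : ℕ))))
          else 0)
    ∧ (∀ l : List A, l ≠ [] →
        extChar k A φ (wordEl k A l) =
          ∑ j ∈ Finset.Icc 1 l.length,
            β (wordEl k A (l.take j)) * extChar k A φ (wordEl k A (l.drop j))) := by
  constructor
  · intro l hl
    rw [phi_eq_BW k A φ β hβ2 hβ l.length l le_rfl hl]
    have hch := chS_eq_BW k A (fun w => β (wordEl k A w)) l l.length 0
      (List.length_pos_iff.2 hl) (by omega)
    rw [List.drop_zero] at hch
    rw [← hch, chS]
    rw [Nat.sub_zero]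
    refine Finset.sum_congr rfl fun q _ => ?_
    rw [chT]
  · intro l hl
    exact phi_rec k A φ β hβ2 hβ l hl
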